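/- Let d > 0, let C be an invertible real m×m matrix, and let H : ℝ → M_m(ℝ) be a continuous matrix-valued function such that every H(x) is symmetric and H(x₁)H(x₂) = H(x₂)H(x₁) for all x₁, x₂. Suppose U : [0,1] → M_m(ℝ) is differentiable with U′(x) = −(1/2)·C H(x) C⁻¹·U(x) and U(0) = E. Then U(1) is invertible and the monodromy matrix V₁ = U(1)⁻¹ satisfies V₁ = C P C⁻¹ with the symmetric positive definite matrix P = exp((1/2)∫₀¹ H(x)dx); in particular V₁ is similar, via the constant matrix C, to a positive definite matrix. (core of the proof of Lemma 4.4) -/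

import Mathlib

open Matrix MeasureTheory Set

section FrobAux
open NormedSpace
variable {m : ℕ}
attribute [local instance] Matrix.frobeniusNormedAddCommGroup Matrix.frobeniusNormedRing
  Matrix.frobeniusNormedAlgebra

noncomputable def entryCLM (i j : Fin m) : Matrix (Fin m) (Fin m) ℝ →L[ℝ] ℝ :=
  LinearMap.toContinuousLinearMap
    ((LinearMap.proj j).comp (LinearMap.proj (R := ℝ) (φ := fun _ : Fin m => Fin m → ℝ) i))

lemma entryCLM_apply (i j : Fin m) (A : Matrix (Fin m) (Fin m) ℝ) : entryCLM i j A = A i j := rfl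

lemma frob_entry_deriv {S : ℝ → Matrix (Fin m) (Fin m) ℝ} {S' : Matrix (Fin m) (Fin m) ℝ}
    {s : Set ℝ} {x : ℝ} (hS : ∀ i j, HasDerivWithinAt (fun t => S t i j) (S' i j) s x) :
    HasDerivWithinAt S S' s x := by
  have h1 : ∀ A : Matrix (Fin m) (Fin m) ℝ, A = ∑ i, ∑ j, A i j • single i j (1:ℝ) :=
    fun A => by
      simp_rw [smul_single, smul_eq_mul, mul_one]
      exact matrix_eq_sum_single A
  have hsum : HasDerivWithinAt (fun t => ∑ i, ∑ j, S t i j • single i j (1:ℝ))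
      (∑ i, ∑ j, S' i j • single i j (1:ℝ)) s x := by
    apply HasDerivWithinAt.fun_sum; intro i _
    apply HasDerivWithinAt.fun_sum; intro j _
    exact (hS i j).smul_const _
  rw [h1 S']
  exact hsum.congr (fun t _ => h1 (S t)) (h1 (S x))

lemma frob_exp_deriv {S : ℝ → Matrix (Fin m) (Fin m) ℝ} {S' : Matrix (Fin m) (Fin m) ℝ}
    {s : Set ℝ} {x : ℝ} (hS : ∀ i j, HasDerivWithinAt (fun t => S t i j) (S' i j) s x)
    (hcomm : ∀ y, Commute (S y) (S x)) :
    ∀ i j, HasDerivWithinAt (fun t => exp (S t) i j) ((S' * exp (S x)) i j) s x := by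
  have hSm : HasDerivWithinAt S S' s x := frob_entry_deriv hS
  have hsub : HasDerivWithinAt (fun y => S y - S x) S' s x := hSm.sub_const _
  have hexp0 : HasFDerivAt (exp)
      (1 : Matrix (Fin m) (Fin m) ℝ →L[ℝ] Matrix (Fin m) (Fin m) ℝ) 0 := hasFDerivAt_exp_zero
  have hg : HasDerivWithinAt (fun y => exp (S y - S x)) S' s x := by
    have h0 : S x - S x = 0 := sub_self _
    have := (h0 ▸ hexp0 : HasFDerivAt (exp) _ (S x - S x)).comp_hasDerivWithinAt x hsub
    exact this
  have hmul : HasDerivWithinAt (fun y => exp (S y - S x) * exp (S x))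
      (S' * exp (S x)) s x := hg.mul_const _
  have heq : ∀ y, exp (S y) = exp (S y - S x) * exp (S x) := by
    intro y
    rw [← Matrix.exp_add_of_commute _ _ ((hcomm y).sub_left (Commute.refl (S x))), sub_add_cancel]
  intro i j
  have := ((entryCLM i j).hasFDerivAt).comp_hasDerivWithinAt x hmul
  simp only [Function.comp_def, entryCLM_apply] at this
  exact this.congr (fun t _ => congrArg (fun M : Matrix (Fin m) (Fin m) ℝ => M i j) (heq t))
    (congrArg (fun M : Matrix (Fin m) (Fin m) ℝ => M i j) (heq x))

lemma frob_commute_exp (A B : Matrix (Fin m) (Fin m) ℝ) (h : Commute A B) :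
    Commute A (exp B) := h.exp_right

end FrobAux

attribute [local instance] Matrix.normedAddCommGroup Matrix.normedSpace

section MainAux
open NormedSpace
variable {m : ℕ}

lemma main_entry_iff {f : ℝ → Matrix (Fin m) (Fin m) ℝ} {f' : Matrix (Fin m) (Fin m) ℝ}
    {s : Set ℝ} {x : ℝ} :
    HasDerivWithinAt f f' s x ↔ ∀ i j, HasDerivWithinAt (fun t => f t i j) (f' i j) s x := by
  exact hasDerivWithinAt_pi.trans (forall_congr' fun i => hasDerivWithinAt_pi)

lemma main_mul_deriv {f g : ℝ → Matrix (Fin m) (Fin m) ℝ} {f' g' : Matrix (Fin m) (Fin m) ℝ}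
    {s : Set ℝ} {x : ℝ} (hf : HasDerivWithinAt f f' s x) (hg : HasDerivWithinAt g g' s x) :
    HasDerivWithinAt (fun t => f t * g t) (f' * g x + f x * g') s x := by
  rw [main_entry_iff] at hf hg ⊢
  intro i j
  have hsum : HasDerivWithinAt (fun t => ∑ k, f t i k * g t k j)
      (∑ k, (f' i k * g x k j + f x i k * g' k j)) s x := by
    apply HasDerivWithinAt.fun_sum; intro k _
    exact (hf i k).mul (hg k j)
  have he : ∀ t, (f t * g t) i j = ∑ k, f t i k * g t k j := fun t => Matrix.mul_apply
  have he' : (f' * g x + f x * g') i j = ∑ k, (f' i k * g x k j + f x i k * g' k j) := by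
    simp [Matrix.mul_apply, Matrix.add_apply, Finset.sum_add_distrib]
  rw [he']
  exact hsum.congr (fun t _ => he t) (he x)

noncomputable def conjCLM (C : Matrix (Fin m) (Fin m) ℝ) :
    Matrix (Fin m) (Fin m) ℝ →L[ℝ] Matrix (Fin m) (Fin m) ℝ :=
  LinearMap.toContinuousLinearMap ((LinearMap.mulRight ℝ C⁻¹).comp (LinearMap.mulLeft ℝ C))

lemma conjCLM_apply (C A : Matrix (Fin m) (Fin m) ℝ) : conjCLM C A = C * A * C⁻¹ := rfl

lemma commute_integral {H : ℝ → Matrix (Fin m) (Fin m) ℝ} (hHcont : Continuous H)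
    (A : Matrix (Fin m) (Fin m) ℝ) (hA : ∀ u, Commute A (H u)) (t : ℝ) :
    Commute A (∫ u in (0:ℝ)..t, H u) := by
  let L := LinearMap.toContinuousLinearMap (LinearMap.mulLeft ℝ A)
  let R := LinearMap.toContinuousLinearMap (LinearMap.mulRight ℝ A)
  have hL : A * (∫ u in (0:ℝ)..t, H u) = ∫ u in (0:ℝ)..t, A * H u :=
    (L.intervalIntegral_comp_comm (hHcont.intervalIntegrable _ _)).symm
  have hR : (∫ u in (0:ℝ)..t, H u) * A = ∫ u in (0:ℝ)..t, H u * A :=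
    (R.intervalIntegral_comp_comm (hHcont.intervalIntegrable _ _)).symm
  unfold Commute SemiconjBy
  rw [hL, hR]
  simp_rw [fun u => (hA u).eq]

lemma integral_isSymm {H : ℝ → Matrix (Fin m) (Fin m) ℝ} (hHcont : Continuous H)
    (hHsymm : ∀ x, (H x).IsSymm) (t : ℝ) : (∫ u in (0:ℝ)..t, H u).IsSymm := by
  let Tr := LinearMap.toContinuousLinearMap
    (Matrix.transposeLinearEquiv (Fin m) (Fin m) ℝ ℝ).toLinearMap
  have h : (∫ u in (0:ℝ)..t, H u)ᵀ = ∫ u in (0:ℝ)..t, (H u)ᵀ :=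
    (Tr.intervalIntegral_comp_comm (hHcont.intervalIntegrable _ _)).symm
  unfold Matrix.IsSymm
  rw [h]
  simp_rw [fun u => (hHsymm u).eq]

lemma exp_posDef (A : Matrix (Fin m) (Fin m) ℝ) (hA : A.IsSymm) : (exp A).PosDef := by
  set Q := exp ((1/2:ℝ) • A) with hQ
  have hhalf : ((1/2:ℝ) • A).IsSymm := by
    unfold Matrix.IsSymm
    rw [transpose_smul, hA.eq]
  have hQsymm : Q.IsSymm := Matrix.IsSymm.exp hhalf
  have hQQ : exp A = Q * Q := by
    rw [hQ, ← Matrix.exp_add_of_commute _ _ (Commute.refl _)]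
    congr 1
    rw [← add_smul]
    norm_num
  have hQunit : IsUnit Q := Matrix.isUnit_exp _
  have hsymm : (exp A).IsSymm := by
    unfold Matrix.IsSymm
    rw [hQQ, transpose_mul, hQsymm.eq]
  have hherm : (exp A).IsHermitian := by
    unfold Matrix.IsHermitian
    rw [conjTranspose_eq_transpose_of_trivial, hsymm.eq]
  refine Matrix.PosDef.of_dotProduct_mulVec_pos hherm fun x hx => ?_
  have hQQ' : exp A = Qᵀ * Q := hQQ.trans (congrArg (· * Q) hQsymm.eq).symm
  have hkey : star x ⬝ᵥ (exp A) *ᵥ x = (Q *ᵥ x) ⬝ᵥ (Q *ᵥ x) := by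
    rw [star_trivial, hQQ', ← mulVec_mulVec, dotProduct_mulVec, vecMul_transpose]
  rw [hkey]
  have hne : Q *ᵥ x ≠ 0 := by
    intro h0
    apply hx
    have hinj := (Matrix.mulVec_injective_iff_isUnit).2 hQunit
    have : Q *ᵥ x = Q *ᵥ 0 := by rw [h0, Matrix.mulVec_zero]
    exact hinj this
  have hnn : (0:ℝ) ≤ (Q *ᵥ x) ⬝ᵥ (Q *ᵥ x) :=
    Finset.sum_nonneg fun i _ => mul_self_nonneg _
  rcases hnn.lt_or_eq with h | h
  · exact h
  · exact absurd ((dotProduct_self_eq_zero).1 h.symm) hne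

end MainAux

/-- Core of the proof of Lemma 4.4: if `H` is continuous with symmetric, pairwise
commuting values, `C` is invertible, and `U` solves `U′ = −(1/2)·C H(x) C⁻¹·U`,
`U(0) = E` on `[0,1]`, then `U(1)` is invertible and the monodromy matrix
`V₁ = U(1)⁻¹` equals `C P C⁻¹` with the symmetric positive definite matrix
`P = exp((1/2)∫₀¹ H(x)dx)`. -/
theorem stmt16 (m : ℕ) (hm : 1 ≤ m) (d : ℝ) (hd : 0 < d)
    (C : Matrix (Fin m) (Fin m) ℝ) (hC : IsUnit C.det)
    (H : ℝ → Matrix (Fin m) (Fin m) ℝ) (hHcont : Continuous H)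
    (hHsymm : ∀ x : ℝ, (H x).IsSymm)
    (hHcomm : ∀ x₁ x₂ : ℝ, H x₁ * H x₂ = H x₂ * H x₁)
    (U : ℝ → Matrix (Fin m) (Fin m) ℝ) (hU0 : U 0 = 1)
    (hU : ∀ x ∈ Icc (0:ℝ) 1,
      HasDerivWithinAt U (-(1/2 : ℝ) • (C * H x * C⁻¹ * U x)) (Icc 0 1) x)
    (P : Matrix (Fin m) (Fin m) ℝ)
    (hP : P = NormedSpace.exp ((1/2 : ℝ) • ∫ x in (0:ℝ)..1, H x)) :
    IsUnit (U 1) ∧ P.IsSymm ∧ P.PosDef ∧ (U 1)⁻¹ = C * P * C⁻¹ := by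
  have hCunit : IsUnit C := (Matrix.isUnit_iff_isUnit_det C).2 hC
  have hCinvC : C⁻¹ * C = 1 := Matrix.nonsing_inv_mul C hC
  set T : ℝ → Matrix (Fin m) (Fin m) ℝ := fun t => (1/2:ℝ) • ∫ u in (0:ℝ)..t, H u with hTdef
  set S : ℝ → Matrix (Fin m) (Fin m) ℝ := fun t => C * T t * C⁻¹ with hSdef
  -- symmetry and posdef of P
  have hAsymm : ((1/2:ℝ) • ∫ x in (0:ℝ)..1, H x).IsSymm := by
    unfold Matrix.IsSymm
    rw [transpose_smul, (integral_isSymm hHcont hHsymm 1).eq]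
  have hPsymm : P.IsSymm := by rw [hP]; exact Matrix.IsSymm.exp hAsymm
  have hPposdef : P.PosDef := by rw [hP]; exact exp_posDef _ hAsymm
  -- derivative facts
  have hTderiv : ∀ x : ℝ, HasDerivAt T ((1/2:ℝ) • H x) x := by
    intro x
    have hI : HasDerivAt (fun t => ∫ u in (0:ℝ)..t, H u) (H x) x :=
      intervalIntegral.integral_hasDerivAt_right (hHcont.intervalIntegrable _ _)
        (ContinuousAt.stronglyMeasurableAtFilter isOpen_univ (fun y _ => hHcont.continuousAt) x (mem_univ x)) hHcont.continuousAt
    exact hI.fun_const_smul _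
  have hSderiv : ∀ x : ℝ, HasDerivAt S ((1/2:ℝ) • (C * H x * C⁻¹)) x := by
    intro x
    have := (conjCLM C).hasFDerivAt.comp_hasDerivAt x (hTderiv x)
    have harr : conjCLM C ((1/2:ℝ) • H x) = (1/2:ℝ) • (C * H x * C⁻¹) := by
      rw [_root_.map_smul, conjCLM_apply]
    exact this.congr_deriv harr
  -- commutation facts
  have hHT : ∀ y t : ℝ, Commute (H y) (T t) := by
    intro y t
    exact (commute_integral hHcont (H y) (fun u => hHcomm y u) t).smul_right _
  have hTT : ∀ s t : ℝ, Commute (T s) (T t) := by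
    intro s t
    refine Commute.smul_left ?_ _
    refine Commute.smul_right ?_ _
    exact commute_integral hHcont _ (fun u => ((commute_integral hHcont (H u)
      (fun v => hHcomm u v) s).symm)) t
  have conj_mul : ∀ A B : Matrix (Fin m) (Fin m) ℝ,
      (C * A * C⁻¹) * (C * B * C⁻¹) = C * (A * B) * C⁻¹ := by
    intro A B
    simp only [← Matrix.mul_assoc]
    rw [Matrix.mul_assoc (C * A) C⁻¹ C, hCinvC, Matrix.mul_one]
  have hSS : ∀ s t : ℝ, Commute (S s) (S t) := by
    intro s t
    unfold Commute SemiconjBy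
    simp only [hSdef]
    rw [conj_mul, conj_mul, (hTT s t).eq]
  have hHcS : ∀ x : ℝ, Commute (C * H x * C⁻¹) (S x) := by
    intro x
    unfold Commute SemiconjBy
    simp only [hSdef]
    rw [conj_mul, conj_mul, (hHT x x).eq]
  -- derivative of exp(S t)
  have hexpS : ∀ x ∈ Icc (0:ℝ) 1, HasDerivWithinAt (fun t => NormedSpace.exp (S t))
      (((1/2:ℝ) • (C * H x * C⁻¹)) * NormedSpace.exp (S x)) (Icc 0 1) x := by
    intro x _
    rw [main_entry_iff]
    exact frob_exp_deriv
      (fun i j => main_entry_iff.1 ((hSderiv x).hasDerivWithinAt) i j)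
      (fun y => hSS y x)
  -- G is constant
  set G : ℝ → Matrix (Fin m) (Fin m) ℝ := fun t => NormedSpace.exp (S t) * U t with hGdef
  have hGderiv : ∀ x ∈ Icc (0:ℝ) 1, HasDerivWithinAt G 0 (Icc 0 1) x := by
    intro x hx
    have h := main_mul_deriv (hexpS x hx) (hU x hx)
    have hcomm : NormedSpace.exp (S x) * (C * H x * C⁻¹) =
        (C * H x * C⁻¹) * NormedSpace.exp (S x) :=
      (frob_commute_exp _ _ (hHcS x)).symm.eq
    have hzero : ((1/2:ℝ) • (C * H x * C⁻¹)) * NormedSpace.exp (S x) * U x +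
        NormedSpace.exp (S x) * (-(1/2:ℝ) • (C * H x * C⁻¹ * U x)) = 0 := by
      rw [Matrix.mul_smul, Matrix.smul_mul, Matrix.smul_mul, ← Matrix.mul_assoc, hcomm]
      rw [Matrix.mul_assoc]
      simp [neg_smul]
    rw [← hzero]
    exact h
  have hG10 : G 1 = G 0 := by
    have hconv : Convex ℝ (Icc (0:ℝ) 1) := convex_Icc 0 1
    have := hconv.norm_image_sub_le_of_norm_hasDerivWithin_le
      (C := 0) (f' := fun _ => (0 : Matrix (Fin m) (Fin m) ℝ)) hGderiv
      (fun x _ => by simp) (left_mem_Icc.2 zero_le_one) (right_mem_Icc.2 zero_le_one)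
    rw [← sub_eq_zero]
    have h0 : ‖G 1 - G 0‖ ≤ 0 := by simpa using this
    exact norm_le_zero_iff.1 h0
  have hS0 : S 0 = 0 := by
    simp only [hSdef, hTdef]
    simp [intervalIntegral.integral_same]
  have hG0 : G 0 = 1 := by
    simp only [hGdef]
    rw [hS0, hU0, NormedSpace.exp_zero, Matrix.one_mul]
  have hBU : NormedSpace.exp (S 1) * U 1 = 1 := by
    have h1 : G 1 = 1 := hG10.trans hG0
    simpa only [hGdef] using h1
  have hUB : U 1 * NormedSpace.exp (S 1) = 1 := mul_eq_one_comm.1 hBU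
  have hUnit : IsUnit (U 1) := ⟨⟨U 1, NormedSpace.exp (S 1), hUB, hBU⟩, rfl⟩
  have hUinv : (U 1)⁻¹ = NormedSpace.exp (S 1) := Matrix.inv_eq_left_inv hBU
  have hSexp : NormedSpace.exp (S 1) = C * P * C⁻¹ := by
    simp only [hSdef, hTdef]
    rw [Matrix.exp_conj C _ hCunit, hP]
  exact ⟨hUnit, hPsymm, hPposdef, by rw [hUinv, hSexp]⟩
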